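/- Let H be an N_r×N_t complex matrix, σ_n² > 0, and let P be an N_t×K complex matrix with rank(HP) = K. Set N(P) = σ_n² (Pᴴ Hᴴ H P)^{-1} with Cholesky factor L(P) and l(P) = (ln L(P)₁₁², …, ln L(P)_KK²). Then there exists a K×K unitary matrix W such that P' = P W satisfies: (i) tr(P'ᴴP') = tr(PᴴP); (ii) N(P') is a diagonal matrix whose diagonal entries are the eigenvalues of N(P), so its Cholesky factor is diagonal (corresponding to zero-forcing linear equalization, i.e., feedback matrix B = 0); and (iii) for every Schur-concave function g : ℝ^K → ℝ, g(l(P')) ≤ g(l(P)). -/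

import Mathlib

open Matrix BigOperators
open scoped ComplexOrder

/-- `a` is majorized by `b` (written `a ≺ b`): after sorting both vectors in
nonincreasing order, every partial sum of `a` is bounded above by the
corresponding partial sum of `b`, and the total sums agree. -/
def IsMajorizedBy {K : ℕ} (a b : Fin K → ℝ) : Prop :=
  ∃ σ τ : Equiv.Perm (Fin K),
    Antitone (a ∘ σ) ∧ Antitone (b ∘ τ) ∧
    (∀ j : ℕ, j < K →
      ∑ i ∈ Finset.univ.filter (fun i : Fin K => (i : ℕ) ≤ j), a (σ i) ≤
        ∑ i ∈ Finset.univ.filter (fun i : Fin K => (i : ℕ) ≤ j), b (τ i)) ∧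
    (∑ i, a i) = (∑ i, b i)

/-- A function `g : ℝ^K → ℝ` is Schur-concave if `a ≺ b` implies `g a ≥ g b`. -/
def SchurConcave {K : ℕ} (g : (Fin K → ℝ) → ℝ) : Prop :=
  ∀ a b : Fin K → ℝ, IsMajorizedBy a b → g b ≤ g a

open Finset Equiv Equiv.Perm Function

local notation "ε " σ:arg => ((Equiv.Perm.sign σ : ℤ) : ℂ)

private theorem det_mul_aux' {m K : ℕ} {M : Matrix (Fin m) (Fin K) ℂ} {N : Matrix (Fin K) (Fin m) ℂ}
    {p : Fin m → Fin K} (H : ¬Function.Injective p) :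
    (∑ σ : Perm (Fin m), ε σ * ∏ x, M (σ x) (p x) * N (p x) x) = 0 := by
  obtain ⟨i, j, hpij, hij⟩ : ∃ i j, p i = p j ∧ i ≠ j := by
    rw [Function.Injective] at H
    push_neg at H
    obtain ⟨i, j, h1, h2⟩ := H
    exact ⟨i, j, h1, h2⟩
  exact
    sum_involution (fun σ _ => σ * Equiv.swap i j)
      (fun σ _ => by
        have : (∏ x, M (σ x) (p x)) = ∏ x, M ((σ * Equiv.swap i j) x) (p x) :=
          Fintype.prod_equiv (Equiv.swap i j) _ _ (by simp [apply_swap_eq_self hpij])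
        simp [this, sign_swap hij, -sign_swap', prod_mul_distrib])
      (fun σ _ _ => (not_congr mul_swap_eq_iff).mpr hij) (fun _ _ => mem_univ _) fun σ _ =>
      mul_swap_involutive i j σ

private theorem monotone_perm_eq_id {m : ℕ} {φ : Fin m → Fin m} (hb : Function.Bijective φ)
    (hm : Monotone φ) : φ = id := by
  have hsm : StrictMono φ := hm.strictMono_of_injective hb.injective
  have h : (univ : Finset (Fin m)).card = m := by simp
  rw [Finset.orderEmbOfFin_unique h (fun x => mem_univ _) hsm,
    ← Finset.orderEmbOfFin_unique h (fun x => mem_univ _) (strictMono_id (α := Fin m))]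

private theorem cauchyBinet {m K : ℕ} (A : Matrix (Fin m) (Fin K) ℂ)
    (B : Matrix (Fin K) (Fin m) ℂ) :
    (A * B).det = ∑ q ∈ univ.filter (fun q : Fin m → Fin K => StrictMono q),
      (A.submatrix id q).det * (B.submatrix q id).det := by
  have hT : ∀ p : Fin m → Fin K,
      (∑ σ : Perm (Fin m), ε σ * ∏ i, A (σ i) (p i) * B (p i) i)
        = (A.submatrix id p).det * ∏ i, B (p i) i := by
    intro p
    rw [det_apply', Finset.sum_mul]
    refine Finset.sum_congr rfl fun σ _ => ?_
    rw [prod_mul_distrib, mul_assoc]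
    rfl
  calc
    (A * B).det = ∑ p : Fin m → Fin K, ∑ σ : Perm (Fin m),
        ε σ * ∏ i, A (σ i) (p i) * B (p i) i := by
      simp only [det_apply', Matrix.mul_apply, prod_univ_sum, mul_sum, Fintype.piFinset_univ]
      rw [Finset.sum_comm]
    _ = ∑ p ∈ univ.filter (fun p : Fin m → Fin K => Function.Injective p),
        ∑ σ : Perm (Fin m), ε σ * ∏ i, A (σ i) (p i) * B (p i) i := by
      refine (sum_subset (filter_subset _ _) fun p _ hp => det_mul_aux' ?_).symm
      simpa only [true_and, mem_filter, mem_univ] using hp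
    _ = ∑ p ∈ univ.filter (fun p : Fin m → Fin K => Function.Injective p),
        (A.submatrix id p).det * ∏ i, B (p i) i := Finset.sum_congr rfl fun p _ => hT p
    _ = ∑ x ∈ (univ.filter (fun q : Fin m → Fin K => StrictMono q)) ×ˢ
          (univ : Finset (Perm (Fin m))),
        (A.submatrix id (x.1 ∘ ⇑x.2)).det * ∏ i, B ((x.1 ∘ ⇑x.2) i) i := by
      refine Finset.sum_nbij' (fun p => (p ∘ ⇑(Tuple.sort p), (Tuple.sort p)⁻¹))
        (fun x => x.1 ∘ ⇑x.2) ?_ ?_ ?_ ?_ ?_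
      · intro p hp
        rw [mem_filter] at hp
        rw [Finset.mem_product, mem_filter]
        exact ⟨⟨mem_univ _, (Tuple.monotone_sort p).strictMono_of_injective
          (hp.2.comp (Tuple.sort p).injective)⟩, mem_univ _⟩
      · intro x hx
        rw [Finset.mem_product, mem_filter] at hx
        rw [mem_filter]
        exact ⟨mem_univ _, hx.1.2.injective.comp x.2.injective⟩
      · intro p _
        funext x
        simp
      · rintro ⟨q, σ⟩ hx
        rw [Finset.mem_product, mem_filter] at hx
        have hq : StrictMono q := hx.1.2
        set τ := Tuple.sort (q ∘ ⇑σ) with hτ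
        have hmono : Monotone ((q ∘ ⇑σ) ∘ ⇑τ) := Tuple.monotone_sort (q ∘ ⇑σ)
        have hφb : Function.Bijective (fun x => σ (τ x)) := σ.bijective.comp τ.bijective
        have hφm : Monotone (fun x => σ (τ x)) := fun x y hxy => hq.le_iff_le.mp (hmono hxy)
        have hφ : (fun x => σ (τ x)) = id := monotone_perm_eq_id hφb hφm
        have hτσ : τ = σ⁻¹ := by
          apply Equiv.ext
          intro x
          have h1 : σ (τ x) = x := congrFun hφ x
          have h2 : τ x = σ.symm x := by
            conv_rhs => rw [← h1, Equiv.symm_apply_apply]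
          simpa using h2
        refine Prod.ext ?_ ?_
        · show (q ∘ ⇑σ) ∘ ⇑τ = q
          funext x
          have h1 : σ (τ x) = x := congrFun hφ x
          simp [Function.comp, h1]
        · show (Tuple.sort (q ∘ ⇑σ))⁻¹ = σ
          rw [← hτ, hτσ, inv_inv]
      · intro p hp
        have hcomp : (p ∘ ⇑(Tuple.sort p)) ∘ ⇑(Tuple.sort p)⁻¹ = p := by
          funext x; simp
        show (A.submatrix id p).det * ∏ i, B (p i) i
          = (A.submatrix id ((p ∘ ⇑(Tuple.sort p)) ∘ ⇑(Tuple.sort p)⁻¹)).det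
            * ∏ i, B (((p ∘ ⇑(Tuple.sort p)) ∘ ⇑(Tuple.sort p)⁻¹) i) i
        rw [hcomp]
    _ = ∑ q ∈ univ.filter (fun q : Fin m → Fin K => StrictMono q),
        (A.submatrix id q).det * (B.submatrix q id).det := by
      rw [Finset.sum_product]
      refine Finset.sum_congr rfl fun q _ => ?_
      have hdet : ∀ σ : Perm (Fin m), (A.submatrix id (q ∘ ⇑σ)).det
          = ε σ * (A.submatrix id q).det := by
        intro σ
        have : A.submatrix id (q ∘ ⇑σ) = (A.submatrix id q).submatrix id ⇑σ := rfl
        rw [this, det_permute']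
      rw [det_apply' (B.submatrix q id), Finset.mul_sum]
      refine Finset.sum_congr rfl fun σ _ => ?_
      rw [hdet σ]
      simp only [submatrix_apply, id_eq, Function.comp_apply]
      ring


private theorem le_val_of_strictMono {m K : ℕ} {f : Fin m → Fin K} (hf : StrictMono f)
    (i : Fin m) : (i : ℕ) ≤ (f i : ℕ) := by
  obtain ⟨v, hv⟩ := i
  induction v with
  | zero => exact Nat.zero_le _
  | succ n ih =>
    have h1 : (⟨n, Nat.lt_of_succ_lt hv⟩ : Fin m) < ⟨n + 1, hv⟩ := by
      simp [Fin.lt_def]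
    have h2 := Fin.lt_def.mp (hf h1)
    have h3 := ih (Nat.lt_of_succ_lt hv)
    simp only [Fin.val_mk] at h2 h3 ⊢
    omega

private theorem image_orderEmbOfFin {K m : ℕ} (S : Finset (Fin K)) (hS : S.card = m) :
    Finset.image ⇑(S.orderEmbOfFin hS) univ = S := by
  ext k
  simp only [Finset.mem_image, mem_univ, true_and]
  constructor
  · rintro ⟨i, rfl⟩; exact S.orderEmbOfFin_mem hS i
  · intro hk
    have : k ∈ Set.range ⇑(S.orderEmbOfFin hS) := by
      rw [Finset.range_orderEmbOfFin]; exact hk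
    obtain ⟨i, hi⟩ := this
    exact ⟨i, hi⟩

private theorem image_castLE {K m : ℕ} (hm : m ≤ K) :
    Finset.image (Fin.castLE hm) univ
      = univ.filter (fun i : Fin K => (i : ℕ) < m) := by
  ext i
  simp only [Finset.mem_image, mem_univ, true_and, mem_filter]
  constructor
  · rintro ⟨j, rfl⟩; exact j.2
  · intro hi; exact ⟨⟨i, hi⟩, rfl⟩

/-- product over any injective selection is at most the product of the `m` largest values. -/
private theorem prod_subset_le_sorted {K m : ℕ} (lam : Fin K → ℝ) (hpos : ∀ k, 0 < lam k)
    (τ : Equiv.Perm (Fin K)) (hτ : Antitone (lam ∘ ⇑τ)) (hm : m ≤ K)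
    {q : Fin m → Fin K} (hq : Function.Injective q) :
    ∏ j, lam (q j) ≤ ∏ i ∈ univ.filter (fun i : Fin K => (i : ℕ) < m), lam (τ i) := by
  classical
  have hq' : Function.Injective (fun j => τ⁻¹ (q j)) := fun x y h => hq (by
    have := congrArg τ h; simpa using this)
  set T : Finset (Fin K) := univ.image (fun j => τ⁻¹ (q j)) with hT
  have hcard : T.card = m := by
    rw [hT, Finset.card_image_of_injective _ hq', Finset.card_univ, Fintype.card_fin]
  set t := T.orderEmbOfFin hcard with ht
  have h1 : ∏ j, lam (q j) = ∏ i ∈ T, lam (τ i) := by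
    rw [hT, Finset.prod_image (fun x _ y _ h => hq' h)]
    refine Finset.prod_congr rfl fun j _ => ?_
    simp
  have h2 : ∏ i ∈ T, lam (τ i) = ∏ j : Fin m, lam (τ (t j)) := by
    rw [← image_orderEmbOfFin T hcard,
      Finset.prod_image (fun x _ y _ h => (T.orderEmbOfFin hcard).injective h)]
  have h3 : ∀ j : Fin m, lam (τ (t j)) ≤ lam (τ (Fin.castLE hm j)) := by
    intro j
    refine hτ ?_
    rw [Fin.le_def]
    exact le_val_of_strictMono (t.strictMono) j
  have h4 : ∏ j : Fin m, lam (τ (t j)) ≤ ∏ j : Fin m, lam (τ (Fin.castLE hm j)) :=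
    Finset.prod_le_prod (fun j _ => le_of_lt (hpos _)) (fun j _ => h3 j)
  have h5 : ∏ j : Fin m, lam (τ (Fin.castLE hm j))
      = ∏ i ∈ univ.filter (fun i : Fin K => (i : ℕ) < m), lam (τ i) := by
    rw [← image_castLE hm, Finset.prod_image (fun x _ y _ h => by
      have := congrArg Fin.val h
      simpa [Fin.ext_iff] using this)]
  rw [h1, h2, ← h5]
  exact h4

private theorem det_row_diag_form {m K : ℕ} (Mr : Matrix (Fin m) (Fin K) ℂ) (w : Fin K → ℝ) :
    (Mr * Matrix.diagonal (fun k => (w k : ℂ)) * Mrᴴ).det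
      = ((∑ q ∈ univ.filter (fun q : Fin m → Fin K => StrictMono q),
          Complex.normSq ((Mr.submatrix id q).det) * ∏ j, w (q j) : ℝ) : ℂ) := by
  rw [cauchyBinet]
  rw [Complex.ofReal_sum]
  refine Finset.sum_congr rfl fun q _ => ?_
  have h1 : (Mr * Matrix.diagonal (fun k => (w k : ℂ))).submatrix id q
      = Mr.submatrix id q * Matrix.diagonal (fun j => (w (q j) : ℂ)) := by
    ext i j
    simp [Matrix.mul_diagonal]
  have h2 : Mrᴴ.submatrix q id = (Mr.submatrix id q)ᴴ := by
    ext i j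
    simp
  rw [h1, h2, Matrix.det_mul, Matrix.det_diagonal, Matrix.det_conjTranspose]
  push_cast
  rw [← Complex.mul_conj]
  rw [Complex.star_def]
  ring

private theorem key_subset_ineq {K m : ℕ} (L V : Matrix (Fin K) (Fin K) ℂ)
    (hLtri : ∀ i j : Fin K, i < j → L i j = 0)
    (hLdiag : ∀ i : Fin K, 0 < (L i i).re ∧ (L i i).im = 0)
    (hV : V * Vᴴ = 1)
    (lam : Fin K → ℝ) (hpos : ∀ k, 0 < lam k)
    (hspec : L * Lᴴ = V * Matrix.diagonal (fun k => (lam k : ℂ)) * Vᴴ)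
    {S : Finset (Fin K)} (hS : S.card = m) (hm : m ≤ K)
    (τ : Equiv.Perm (Fin K)) (hτ : Antitone (lam ∘ ⇑τ)) :
    ∏ k ∈ S, ((L k k).re) ^ 2
      ≤ ∏ i ∈ univ.filter (fun i : Fin K => (i : ℕ) < m), lam (τ i) := by
  classical
  set e : Fin m → Fin K := ⇑(S.orderEmbOfFin hS) with he
  have hesm : StrictMono e := (S.orderEmbOfFin hS).strictMono
  set Lr := L.submatrix e id with hLr
  set Vr := V.submatrix e id with hVr
  have hsub : ∀ M N : Matrix (Fin K) (Fin K) ℂ,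
      (M * N).submatrix e e = M.submatrix e id * N.submatrix id e :=
    fun M N => Matrix.submatrix_mul M N e id e Function.bijective_id
  have hLrH : Lᴴ.submatrix id e = Lrᴴ := by ext i j; simp [hLr]
  have hVrH : Vᴴ.submatrix id e = Vrᴴ := by ext i j; simp [hVr]
  have hone : Matrix.diagonal (fun _ : Fin K => ((1 : ℝ) : ℂ)) = 1 := by
    simp
  -- two expressions for the compressed determinant
  have hLform : (L * Lᴴ).submatrix e e = Lr * Matrix.diagonal (fun _ : Fin K => ((1:ℝ):ℂ)) * Lrᴴ := by
    rw [hsub, hLrH, hone, Matrix.mul_one]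
  have hVform : (L * Lᴴ).submatrix e e
      = Vr * Matrix.diagonal (fun k => (lam k : ℂ)) * Vrᴴ := by
    rw [hspec, hsub, hVrH]
    rw [Matrix.submatrix_mul V _ e id id Function.bijective_id, Matrix.submatrix_id_id]
  have hVnorm : Vr * Matrix.diagonal (fun _ : Fin K => ((1:ℝ):ℂ)) * Vrᴴ = 1 := by
    rw [hone, Matrix.mul_one, ← hVrH, ← hsub, hV]
    ext i j
    by_cases h : i = j
    · subst h; simp
    · have : e i ≠ e j := fun hc => h (hesm.injective hc)
      simp [Matrix.one_apply, h, this, Matrix.submatrix_apply]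
  set F := univ.filter (fun q : Fin m → Fin K => StrictMono q) with hF
  set R := ∏ i ∈ univ.filter (fun i : Fin K => (i : ℕ) < m), lam (τ i) with hR
  have hRnonneg : 0 ≤ R := Finset.prod_nonneg fun i _ => le_of_lt (hpos _)
  have d1 := det_row_diag_form Lr (fun _ => (1:ℝ))
  have d2 := det_row_diag_form Vr lam
  have d3 := det_row_diag_form Vr (fun _ => (1:ℝ))
  rw [← hLform] at d1
  rw [← hVform] at d2
  rw [hVnorm, Matrix.det_one] at d3
  -- sums of real numbers
  have hAB : (∑ q ∈ F, Complex.normSq ((Lr.submatrix id q).det) * ∏ _j : Fin m, (1:ℝ))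
      = ∑ q ∈ F, Complex.normSq ((Vr.submatrix id q).det) * ∏ j, lam (q j) := by
    have := d1.symm.trans d2
    exact_mod_cast this
  have hBone : (∑ q ∈ F, Complex.normSq ((Vr.submatrix id q).det) * ∏ _j : Fin m, (1:ℝ)) = 1 := by
    exact_mod_cast d3.symm
  -- lower bound on the first sum
  have hlower : ∏ k ∈ S, ((L k k).re) ^ 2
      ≤ ∑ q ∈ F, Complex.normSq ((Lr.submatrix id q).det) * ∏ _j : Fin m, (1:ℝ) := by
    have heF : e ∈ F := by rw [hF, mem_filter]; exact ⟨mem_univ _, hesm⟩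
    have htri : ((Lr.submatrix id e)).BlockTriangular ⇑OrderDual.toDual := by
      intro i j hij
      have hij' : i < j := hij
      show L (e i) (e j) = 0
      exact hLtri _ _ (hesm hij')
    have hdet : (Lr.submatrix id e).det = ∏ i : Fin m, L (e i) (e i) := by
      rw [Matrix.det_of_lowerTriangular _ htri]
      rfl
    have hreal : ∀ i : Fin m, L (e i) (e i) = (((L (e i) (e i)).re : ℝ) : ℂ) := by
      intro i
      apply Complex.ext
      · simp
      · simp [(hLdiag (e i)).2]
    have hdet2 : (Lr.submatrix id e).det = ((∏ i : Fin m, (L (e i) (e i)).re : ℝ) : ℂ) := by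
      rw [hdet, Complex.ofReal_prod]
      exact Finset.prod_congr rfl fun i _ => hreal i
    have hns : Complex.normSq ((Lr.submatrix id e).det)
        = ∏ i : Fin m, ((L (e i) (e i)).re) ^ 2 := by
      rw [hdet2, Complex.normSq_ofReal, ← Finset.prod_mul_distrib]
      exact Finset.prod_congr rfl fun i _ => (sq ((L (e i) (e i)).re)).symm
    have hSprod : ∏ k ∈ S, ((L k k).re) ^ 2 = ∏ i : Fin m, ((L (e i) (e i)).re) ^ 2 := by
      rw [← image_orderEmbOfFin S hS, Finset.prod_image
        (fun x _ y _ h => (S.orderEmbOfFin hS).injective h)]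
    calc ∏ k ∈ S, ((L k k).re) ^ 2
        = Complex.normSq ((Lr.submatrix id e).det) * ∏ _j : Fin m, (1:ℝ) := by
          rw [hns, hSprod]; simp
      _ ≤ ∑ q ∈ F, Complex.normSq ((Lr.submatrix id q).det) * ∏ _j : Fin m, (1:ℝ) := by
          refine Finset.single_le_sum
            (f := fun q => Complex.normSq ((Lr.submatrix id q).det) * ∏ _j : Fin m, (1:ℝ))
            (fun q _ => ?_) heF
          simp [Complex.normSq_nonneg]
  -- upper bound on the second sum
  have hupper : (∑ q ∈ F, Complex.normSq ((Vr.submatrix id q).det) * ∏ j, lam (q j)) ≤ R := by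
    calc (∑ q ∈ F, Complex.normSq ((Vr.submatrix id q).det) * ∏ j, lam (q j))
        ≤ ∑ q ∈ F, Complex.normSq ((Vr.submatrix id q).det) * R := by
          refine Finset.sum_le_sum fun q hq => ?_
          have hqsm : StrictMono q := by rw [hF, mem_filter] at hq; exact hq.2
          exact mul_le_mul_of_nonneg_left
            (prod_subset_le_sorted lam hpos τ hτ hm hqsm.injective)
            (Complex.normSq_nonneg _)
      _ = (∑ q ∈ F, Complex.normSq ((Vr.submatrix id q).det) * ∏ _j : Fin m, (1:ℝ)) * R := by
          rw [Finset.sum_mul]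
          refine Finset.sum_congr rfl fun q _ => by simp [mul_assoc]
      _ = R := by rw [hBone, one_mul]
  calc ∏ k ∈ S, ((L k k).re) ^ 2
      ≤ ∑ q ∈ F, Complex.normSq ((Lr.submatrix id q).det) * ∏ _j : Fin m, (1:ℝ) := hlower
    _ = ∑ q ∈ F, Complex.normSq ((Vr.submatrix id q).det) * ∏ j, lam (q j) := hAB
    _ ≤ R := hupper

private theorem card_filter_lt {K m : ℕ} (hm : m ≤ K) :
    ((univ : Finset (Fin K)).filter (fun i : Fin K => (i : ℕ) < m)).card = m := by
  rw [← image_castLE hm, Finset.card_image_of_injective _ (Fin.castLE_injective hm)]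
  simp


private theorem majorization_final {K : ℕ} (L V : Matrix (Fin K) (Fin K) ℂ)
    (hLtri : ∀ i j : Fin K, i < j → L i j = 0)
    (hLdiag : ∀ i : Fin K, 0 < (L i i).re ∧ (L i i).im = 0)
    (hV : V * Vᴴ = 1) (dd : Fin K → ℝ) (hd : ∀ k, 0 < dd k)
    (hspec : L * Lᴴ = V * Matrix.diagonal (fun k => (dd k : ℂ)) * Vᴴ) :
    IsMajorizedBy (fun k => Real.log ((L k k).re ^ 2)) (fun k => Real.log (dd k)) := by
  classical
  set a : Fin K → ℝ := fun k => Real.log ((L k k).re ^ 2) with ha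
  set b : Fin K → ℝ := fun k => Real.log (dd k) with hb
  set σ : Equiv.Perm (Fin K) := Tuple.sort (fun k => -a k) with hσ
  set τ : Equiv.Perm (Fin K) := Tuple.sort (fun k => -dd k) with hτdef
  have hσanti : Antitone (a ∘ ⇑σ) := by
    intro x y hxy
    have := Tuple.monotone_sort (fun k => -a k) hxy
    simpa using this
  have hτddanti : Antitone (dd ∘ ⇑τ) := by
    intro x y hxy
    have := Tuple.monotone_sort (fun k => -dd k) hxy
    simpa using this
  have hτanti : Antitone (b ∘ ⇑τ) := by
    intro x y hxy
    exact Real.log_le_log (hd _) (hτddanti hxy)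
  refine ⟨σ, τ, hσanti, hτanti, ?_, ?_⟩
  · -- partial sums
    intro j hj
    set Sf : Finset (Fin K) := univ.filter (fun i : Fin K => (i : ℕ) ≤ j) with hSf
    have hfe : Sf = univ.filter (fun i : Fin K => (i : ℕ) < j + 1) := by
      rw [hSf]
      congr 1
      ext i
      simp [Nat.lt_succ_iff]
    have hcardSf : Sf.card = j + 1 := by rw [hfe]; exact card_filter_lt hj
    set S : Finset (Fin K) := Sf.image ⇑σ with hS
    have hcardS : S.card = j + 1 := by
      rw [hS, Finset.card_image_of_injective _ σ.injective]; exact hcardSf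
    have hL1 : ∑ i ∈ Sf, a (σ i) = ∑ k ∈ S, a k := by
      rw [hS, Finset.sum_image (fun x _ y _ h => σ.injective h)]
    have hkey := key_subset_ineq L V hLtri hLdiag hV dd hd hspec hcardS hj τ hτddanti
    -- log of products
    have hpos1 : ∀ k ∈ S, (0:ℝ) < (L k k).re ^ 2 := fun k _ => pow_pos (hLdiag k).1 2
    have hlogL : ∑ k ∈ S, a k = Real.log (∏ k ∈ S, (L k k).re ^ 2) := by
      rw [Real.log_prod (fun k hk => ne_of_gt (hpos1 k hk))]
    have hlogR : ∑ i ∈ univ.filter (fun i : Fin K => (i : ℕ) < j + 1), b (τ i)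
        = Real.log (∏ i ∈ univ.filter (fun i : Fin K => (i : ℕ) < j + 1), dd (τ i)) := by
      rw [Real.log_prod (fun k _ => ne_of_gt (hd _))]
    calc ∑ i ∈ Sf, a (σ i) = ∑ k ∈ S, a k := hL1
      _ = Real.log (∏ k ∈ S, (L k k).re ^ 2) := hlogL
      _ ≤ Real.log (∏ i ∈ univ.filter (fun i : Fin K => (i : ℕ) < j + 1), dd (τ i)) :=
          Real.log_le_log (Finset.prod_pos hpos1) hkey
      _ = ∑ i ∈ univ.filter (fun i : Fin K => (i : ℕ) < j + 1), b (τ i) := hlogR.symm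
      _ = ∑ i ∈ Sf, b (τ i) := by rw [← hfe]
  · -- total sums
    have hprod : (∏ i, (L i i).re) ^ 2 = ∏ k, dd k := by
      have h1 : (L * Lᴴ).det = ((((∏ i, (L i i).re) ^ 2 : ℝ)) : ℂ) := by
        have hLreal : ∀ i, L i i = (((L i i).re : ℝ) : ℂ) := fun i => by
          apply Complex.ext
          · simp
          · simp [(hLdiag i).2]
        have hdetL : L.det = ((∏ i, (L i i).re : ℝ) : ℂ) := by
          rw [Matrix.det_of_lowerTriangular _ (fun i j hij => hLtri _ _ hij),
            Complex.ofReal_prod]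
          exact Finset.prod_congr rfl fun i _ => hLreal i
        rw [Matrix.det_mul, Matrix.det_conjTranspose, hdetL, Complex.star_def,
          Complex.conj_ofReal]
        push_cast
        ring
      have h2 : (L * Lᴴ).det = ((∏ k, dd k : ℝ) : ℂ) := by
        rw [hspec, Matrix.det_mul, Matrix.det_mul, Matrix.det_diagonal]
        have hVdet : V.det * Vᴴ.det = 1 := by
          rw [← Matrix.det_mul, hV, Matrix.det_one]
        calc V.det * (∏ k, ((dd k : ℝ) : ℂ)) * Vᴴ.det
            = (V.det * Vᴴ.det) * ∏ k, ((dd k : ℝ) : ℂ) := by ring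
          _ = ((∏ k, dd k : ℝ) : ℂ) := by rw [hVdet, one_mul, Complex.ofReal_prod]
      have := h1.symm.trans h2
      exact_mod_cast this
    have hprodL : ∏ k, (L k k).re ^ 2 = ∏ k, dd k := by
      rw [← hprod, ← Finset.prod_pow]
    calc (∑ i, a i) = Real.log (∏ k, (L k k).re ^ 2) := by
          rw [Real.log_prod (fun k _ => ne_of_gt (pow_pos (hLdiag k).1 2))]
      _ = Real.log (∏ k, dd k) := by rw [hprodL]
      _ = ∑ i, b i := by
          rw [Real.log_prod (fun k _ => ne_of_gt (hd _))]

private theorem charpoly_unitary_conj {K : ℕ} (U D : Matrix (Fin K) (Fin K) ℂ)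
    (hU1 : U * star U = 1) :
    (U * D * star U).charpoly = D.charpoly := by
  unfold Matrix.charpoly
  have hmap1 : (U * D * star U).map (⇑(Polynomial.C : ℂ →+* Polynomial ℂ))
      = U.map Polynomial.C * D.map Polynomial.C * (star U).map Polynomial.C := by
    rw [Matrix.map_mul, Matrix.map_mul]
  have hmapU : U.map (⇑(Polynomial.C : ℂ →+* Polynomial ℂ)) * (star U).map Polynomial.C
      = 1 := by
    rw [← Matrix.map_mul, hU1]
    ext i j
    by_cases h : i = j <;> simp [Matrix.one_apply, h]
  have hcomm : ∀ M : Matrix (Fin K) (Fin K) (Polynomial ℂ),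
      Matrix.scalar (Fin K) (Polynomial.X) * M = M * Matrix.scalar (Fin K) (Polynomial.X) :=
    fun M => (Matrix.scalar_commute (Polynomial.X) (fun r => Commute.all _ r) M)
  have hsc : U.map Polynomial.C * Matrix.scalar (Fin K) Polynomial.X
      * (star U).map Polynomial.C = Matrix.scalar (Fin K) Polynomial.X := by
    rw [← hcomm, Matrix.mul_assoc, hmapU, Matrix.mul_one]
  have hch : (U * D * star U).charmatrix
      = U.map Polynomial.C * D.charmatrix * (star U).map Polynomial.C := by
    unfold Matrix.charmatrix
    simp only [RingHom.mapMatrix_apply]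
    rw [Matrix.mul_sub, Matrix.sub_mul, hmap1, hsc]
  have hdet1 : (U.map (⇑(Polynomial.C : ℂ →+* Polynomial ℂ))).det
      * ((star U).map (⇑(Polynomial.C : ℂ →+* Polynomial ℂ))).det = 1 := by
    rw [← Matrix.det_mul, hmapU, Matrix.det_one]
  rw [hch, Matrix.det_mul, Matrix.det_mul, mul_right_comm, hdet1, one_mul]

private theorem charpoly_diagonal' {K : ℕ} (v : Fin K → ℂ) :
    (Matrix.diagonal v).charpoly = ∏ k, (Polynomial.X - Polynomial.C (v k)) := by
  unfold Matrix.charpoly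
  have h : (Matrix.diagonal v).charmatrix
      = Matrix.diagonal (fun k => Polynomial.X - Polynomial.C (v k)) := by
    apply Matrix.ext
    intro i j
    by_cases h : i = j
    · subst h; simp
    · rw [Matrix.charmatrix_apply_ne _ _ _ h, Matrix.diagonal_apply_ne _ h,
        Matrix.diagonal_apply_ne _ h]
      simp
  rw [h, Matrix.det_diagonal]

/-- Schur-concave part of Theorem 1.  There is a unitary `W`
such that `P' = P W` uses the same power as `P`, makes
`N(P') = σ_n² (P'ᴴHᴴHP')⁻¹` a diagonal matrix whose (positive) diagonal
entries are the eigenvalues of `N(P)` (so the Cholesky factor of `N(P')` is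
diagonal, i.e. the feedback matrix is `B = 0`), and for every Schur-concave
`g` satisfies `g(l(P')) ≤ g(l(P))`. -/
theorem exists_unitary_diagonalizing_schurConcave
    {Nr Nt K : ℕ}
    (H : Matrix (Fin Nr) (Fin Nt) ℂ) (P : Matrix (Fin Nt) (Fin K) ℂ)
    (hrank : (H * P).rank = K) (σn2 : ℝ) (hσn2 : 0 < σn2)
    (LP : Matrix (Fin K) (Fin K) ℂ)
    (hLPtri : ∀ i j : Fin K, i < j → LP i j = 0)
    (hLPdiag : ∀ i : Fin K, 0 < (LP i i).re ∧ (LP i i).im = 0)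
    (hLP : (σn2 : ℂ) • (Pᴴ * Hᴴ * H * P)⁻¹ = LP * LPᴴ) :
    ∃ W ∈ Matrix.unitaryGroup (Fin K) ℂ,
      ((P * W)ᴴ * (P * W)).trace = (Pᴴ * P).trace ∧
      ∃ d : Fin K → ℝ, (∀ k, 0 < d k) ∧
        (σn2 : ℂ) • ((P * W)ᴴ * Hᴴ * H * (P * W))⁻¹ =
          Matrix.diagonal (fun k => (d k : ℂ)) ∧
        ((σn2 : ℂ) • (Pᴴ * Hᴴ * H * P)⁻¹).charpoly =
          ∏ k : Fin K, (Polynomial.X - Polynomial.C ((d k : ℂ))) ∧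
        ∀ g : (Fin K → ℝ) → ℝ, SchurConcave g →
          g (fun k => Real.log (d k)) ≤
            g (fun k => Real.log ((LP k k).re ^ 2)) := by
  classical
  have hLPreal : ∀ i, LP i i = (((LP i i).re : ℝ) : ℂ) := fun i => by
    apply Complex.ext
    · simp
    · simp [(hLPdiag i).2]
  have hprodpos : 0 < ∏ i, (LP i i).re := Finset.prod_pos fun i _ => (hLPdiag i).1
  have hdetLP : LP.det = ((∏ i, (LP i i).re : ℝ) : ℂ) := by
    rw [Matrix.det_of_lowerTriangular _ (fun i j hij => hLPtri _ _ hij), Complex.ofReal_prod]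
    exact Finset.prod_congr rfl fun i _ => hLPreal i
  have hdetLPne : LP.det ≠ 0 := by
    rw [hdetLP]
    exact_mod_cast ne_of_gt hprodpos
  have hdetLPH : IsUnit LPᴴ := by
    rw [Matrix.isUnit_iff_isUnit_det, Matrix.det_conjTranspose, isUnit_iff_ne_zero]
    simpa using hdetLPne
  set N : Matrix (Fin K) (Fin K) ℂ := LP * LPᴴ with hNdef
  have hNpd : N.PosDef := by
    refine Matrix.PosDef.of_dotProduct_mulVec_pos (Matrix.isHermitian_mul_conjTranspose_self LP) fun x hx => ?_
    have hy : LPᴴ *ᵥ x ≠ 0 := by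
      intro h0
      apply hx
      have hinj : Function.Injective (LPᴴ.mulVec) :=
        Matrix.mulVec_injective_iff_isUnit.mpr hdetLPH
      apply hinj
      rw [h0, Matrix.mulVec_zero]
    have h2 : star x ᵥ* LP = star (LPᴴ *ᵥ x) := by
      conv_lhs => rw [← conjTranspose_conjTranspose LP]
      rw [Matrix.vecMul_conjTranspose, star_star]
    have h3 : star x ⬝ᵥ N *ᵥ x = star (LPᴴ *ᵥ x) ⬝ᵥ (LPᴴ *ᵥ x) := by
      rw [hNdef, ← Matrix.mulVec_mulVec, Matrix.dotProduct_mulVec, h2]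
    rw [h3]
    exact Matrix.dotProduct_star_self_pos_iff.mpr hy
  have hNherm : N.IsHermitian := hNpd.1
  set dd : Fin K → ℝ := hNherm.eigenvalues with hdd
  have hdpos : ∀ k, 0 < dd k := hNpd.eigenvalues_pos
  set W : Matrix (Fin K) (Fin K) ℂ := (hNherm.eigenvectorUnitary : Matrix (Fin K) (Fin K) ℂ)
    with hWdef
  have hWmem : W ∈ Matrix.unitaryGroup (Fin K) ℂ := hNherm.eigenvectorUnitary.2
  have hU1 : W * star W = 1 := Matrix.mem_unitaryGroup_iff.mp hWmem
  have hU2 : star W * W = 1 := Matrix.mem_unitaryGroup_iff'.mp hWmem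
  have hofReal : (RCLike.ofReal ∘ dd : Fin K → ℂ) = fun k => ((dd k : ℝ) : ℂ) := rfl
  have hspecdiag : star W * N * W = Matrix.diagonal (fun k => ((dd k : ℝ) : ℂ)) := by
    rw [← hofReal]
    have h := Matrix.IsHermitian.conjStarAlgAut_star_eigenvectorUnitary hNherm
    simp only [Unitary.conjStarAlgAut_apply, Unitary.coe_star, star_star] at h
    exact h
  have hspec : N = W * Matrix.diagonal (fun k => ((dd k : ℝ) : ℂ)) * star W := by
    rw [← hofReal]
    exact hNherm.spectral_theorem
  set A : Matrix (Fin K) (Fin K) ℂ := Pᴴ * Hᴴ * H * P with hAdef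
  have hσn2C : (σn2 : ℂ) ≠ 0 := by exact_mod_cast ne_of_gt hσn2
  have hAinv : A⁻¹ = (σn2 : ℂ)⁻¹ • N := by
    rw [← hLP, smul_smul, inv_mul_cancel₀ hσn2C, one_smul]
  have hdetNne : N.det ≠ 0 := ne_of_gt (by exact_mod_cast hNpd.det_pos)
  have hAunit : IsUnit A.det := by
    rw [← Matrix.isUnit_nonsing_inv_det_iff, hAinv, Matrix.det_smul, isUnit_iff_ne_zero]
    exact mul_ne_zero (pow_ne_zero _ (inv_ne_zero hσn2C)) hdetNne
  refine ⟨W, hWmem, ?_, dd, hdpos, ?_, ?_, ?_⟩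
  · -- trace
    rw [Matrix.conjTranspose_mul]
    have h1 : Wᴴ * Pᴴ * (P * W) = Wᴴ * (Pᴴ * P) * W := by
      simp only [Matrix.mul_assoc]
    rw [h1, Matrix.trace_mul_cycle, ← Matrix.star_eq_conjTranspose, hU1, one_mul]
  · -- diagonal
    have hconj : (P * W)ᴴ * Hᴴ * H * (P * W) = Wᴴ * A * W := by
      rw [Matrix.conjTranspose_mul, hAdef]
      simp only [Matrix.mul_assoc]
    have hinv : (Wᴴ * A * W)⁻¹ = Wᴴ * A⁻¹ * W := by
      apply Matrix.inv_eq_right_inv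
      have e1 : Wᴴ * A * W * (Wᴴ * A⁻¹ * W) = Wᴴ * (A * ((W * Wᴴ) * (A⁻¹ * W))) := by
        simp only [Matrix.mul_assoc]
      rw [e1, ← Matrix.star_eq_conjTranspose, hU1, one_mul, ← Matrix.mul_assoc A A⁻¹ W,
        Matrix.mul_nonsing_inv _ hAunit, one_mul, hU2]
    rw [hconj, hinv, hAinv]
    have e2 : Wᴴ * ((σn2 : ℂ)⁻¹ • N) * W = (σn2 : ℂ)⁻¹ • (Wᴴ * N * W) := by
      rw [Matrix.mul_smul, Matrix.smul_mul]
    rw [e2, smul_smul, mul_inv_cancel₀ hσn2C, one_smul, ← Matrix.star_eq_conjTranspose,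
      hspecdiag]
  · -- charpoly
    rw [hLP, hspec, charpoly_unitary_conj _ _ hU1, charpoly_diagonal']
  · -- Schur-concave
    intro g hg
    apply hg
    exact majorization_final LP W hLPtri hLPdiag hU1 dd hdpos hspec
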